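/- Let Δ be the triangle with vertices A = (−1,0), B = (1,0), C = (x,y) where x ≥ 0, y > 0, and x² + y² ≤ 1. Then δ(Γ) = 1, where Γ is the boundary of Δ; consequently L(Δ)/δ(Γ) > 4. -/

import Mathlib

private lemma dist_pt (a b c d : ℝ) :
    dist ((WithLp.equiv 2 (Fin 2 → ℝ)).symm ![a, b]) ((WithLp.equiv 2 (Fin 2 → ℝ)).symm ![c, d])
      = Real.sqrt ((a - c) ^ 2 + (b - d) ^ 2) := by
  rw [EuclideanSpace.dist_eq]
  simp [Fin.sum_univ_two, Real.dist_eq, sq_abs, WithLp.equiv_symm_apply, PiLp.toLp_apply]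

/-- For the triangle with vertices `A = (−1,0)`, `B = (1,0)`, `C = (x,y)` with
`x ≥ 0`, `y > 0` and `x² + y² ≤ 1`, the minimax invariant of the boundary is
`δ = 1`, and consequently `L/δ > 4`. -/
theorem triangle_delta_eq_one
    (x y : ℝ) (hx : 0 ≤ x) (hy : 0 < y) (hxy : x ^ 2 + y ^ 2 ≤ 1)
    (A B C : EuclideanSpace ℝ (Fin 2))
    (hA : A = (WithLp.equiv 2 (Fin 2 → ℝ)).symm ![-1, 0])
    (hB : B = (WithLp.equiv 2 (Fin 2 → ℝ)).symm ![1, 0])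
    (hC : C = (WithLp.equiv 2 (Fin 2 → ℝ)).symm ![x, y])
    (Γ : Set (EuclideanSpace ℝ (Fin 2)))
    (hΓ : Γ = segment ℝ A B ∪ segment ℝ B C ∪ segment ℝ C A)
    (L δ : ℝ) (hL : L = dist A B + dist B C + dist C A)
    (hδ : δ = ⨅ p : Γ, ⨆ q : Γ, dist (p : EuclideanSpace ℝ (Fin 2)) (q : EuclideanSpace ℝ (Fin 2))) :
    δ = 1 ∧ L / δ > 4 := by
  have hx1 : x ≤ 1 := by nlinarith
  set O : EuclideanSpace ℝ (Fin 2) := (WithLp.equiv 2 (Fin 2 → ℝ)).symm ![0, 0] with hO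
  -- distance facts
  have dAB : dist A B = 2 := by
    rw [hA, hB, dist_pt]; rw [show ((-1 : ℝ) - 1) ^ 2 + ((0:ℝ) - 0) ^ 2 = 4 by ring]
    rw [show (4:ℝ) = 2 ^ 2 by norm_num, Real.sqrt_sq (by norm_num)]
  have dAO : dist A O = 1 := by
    rw [hA, hO, dist_pt]; norm_num
  have dBO : dist B O = 1 := by
    rw [hB, hO, dist_pt]; norm_num
  have dCO : dist C O ≤ 1 := by
    rw [hC, hO, dist_pt]
    rw [show (x - 0) ^ 2 + (y - 0) ^ 2 = x ^ 2 + y ^ 2 by ring]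
    calc Real.sqrt (x ^ 2 + y ^ 2) ≤ Real.sqrt 1 := Real.sqrt_le_sqrt hxy
      _ = 1 := Real.sqrt_one
  -- O is the midpoint of A and B
  have hOmid : O = midpoint ℝ A B := by
    rw [hA, hB, hO]
    rw [midpoint_eq_smul_add, WithLp.equiv_symm_apply, ← WithLp.toLp_add, ← WithLp.toLp_smul]
    congr 1
    funext i
    fin_cases i <;> simp
  have hOseg : O ∈ segment ℝ A B := hOmid ▸ midpoint_mem_segment A B
  have hAΓ : A ∈ Γ := by rw [hΓ]; exact Or.inl (Or.inl (left_mem_segment ℝ A B))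
  have hBΓ : B ∈ Γ := by rw [hΓ]; exact Or.inl (Or.inl (right_mem_segment ℝ A B))
  have hOΓ : O ∈ Γ := by rw [hΓ]; exact Or.inl (Or.inl hOseg)
  haveI : Nonempty Γ := ⟨⟨O, hOΓ⟩⟩
  -- all of Γ is within distance 1 of O
  have hnear : ∀ q ∈ Γ, dist q O ≤ 1 := by
    intro q hq
    rw [hΓ] at hq
    have hcv := convexOn_dist O (convex_univ (E := EuclideanSpace ℝ (Fin 2)))
    rcases hq with (hq | hq) | hq
    · have := hcv.le_on_segment (Set.mem_univ A) (Set.mem_univ B) hq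
      simpa [dAO, dBO] using this
    · have := hcv.le_on_segment (Set.mem_univ B) (Set.mem_univ C) hq
      simp only [le_sup_iff, dBO] at this
      rcases this with h | h
      · exact h
      · exact h.trans dCO
    · have := hcv.le_on_segment (Set.mem_univ C) (Set.mem_univ A) hq
      simp only [le_sup_iff, dAO] at this
      rcases this with h | h
      · exact h.trans dCO
      · exact h
  -- boundedness of the inner sup
  have hbdd : ∀ p : Γ, BddAbove (Set.range fun q : Γ => dist (p : EuclideanSpace ℝ (Fin 2)) q) := by
    intro p
    refine ⟨2, ?_⟩
    rintro r ⟨q, rfl⟩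
    calc dist (p : EuclideanSpace ℝ (Fin 2)) q ≤ dist (p : EuclideanSpace ℝ (Fin 2)) O + dist O q :=
          dist_triangle _ _ _
      _ ≤ 1 + 1 := by
          have h1 := hnear p p.2
          have h2 := hnear q q.2
          rw [dist_comm O q]; exact add_le_add h1 h2
      _ = 2 := by norm_num
  have hδ1 : δ = 1 := by
    rw [hδ]
    apply le_antisymm
    · refine ciInf_le_of_le ⟨0, ?_⟩ ⟨O, hOΓ⟩ ?_
      · rintro r ⟨p, rfl⟩
        exact Real.iSup_nonneg fun q => dist_nonneg
      · refine ciSup_le fun q => ?_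
        rw [dist_comm]
        exact hnear q q.2
    · refine le_ciInf fun p => ?_
      have h1 := le_ciSup (hbdd p) ⟨A, hAΓ⟩
      have h2 := le_ciSup (hbdd p) ⟨B, hBΓ⟩
      have htri : (2 : ℝ) ≤ dist (p : EuclideanSpace ℝ (Fin 2)) A + dist (p : EuclideanSpace ℝ (Fin 2)) B := by
        rw [dist_comm (p : EuclideanSpace ℝ (Fin 2)) A]
        calc (2:ℝ) = dist A B := dAB.symm
          _ ≤ dist A (p : EuclideanSpace ℝ (Fin 2)) + dist (p : EuclideanSpace ℝ (Fin 2)) B :=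
              dist_triangle _ _ _
      simp only at h1 h2
      linarith
  refine ⟨hδ1, ?_⟩
  have dBC : dist B C = Real.sqrt ((1 - x) ^ 2 + (0 - y) ^ 2) := by rw [hB, hC, dist_pt]
  have dCA : dist C A = Real.sqrt ((x - (-1)) ^ 2 + (y - 0) ^ 2) := by rw [hC, hA, dist_pt]
  have hs := Real.sqrt_nonneg ((1 - x) ^ 2 + (0 - y) ^ 2)
  have ht := Real.sqrt_nonneg ((x - (-1)) ^ 2 + (y - 0) ^ 2)
  have hs2 : Real.sqrt ((1 - x) ^ 2 + (0 - y) ^ 2) ^ 2 = (1 - x) ^ 2 + (0 - y) ^ 2 :=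
    Real.sq_sqrt (by positivity)
  have ht2 : Real.sqrt ((x - (-1)) ^ 2 + (y - 0) ^ 2) ^ 2 = (x - (-1)) ^ 2 + (y - 0) ^ 2 :=
    Real.sq_sqrt (by positivity)
  have hsum : dist B C + dist C A > 2 := by
    rw [dBC, dCA]
    nlinarith [sq_nonneg (Real.sqrt ((1 - x) ^ 2 + (0 - y) ^ 2) - (1 - x)),
      sq_nonneg (Real.sqrt ((x - (-1)) ^ 2 + (y - 0) ^ 2) - (x + 1)), sq_nonneg y, mul_pos hy hy]
  rw [hδ1, hL, dAB, div_one]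
  linarith
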